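/- arXiv:2303.09179 — 2 statements merged into one kernel-verified Lean document; each statement's English description precedes it below -/
import Mathlib

section
/- Let Γ = {(k,m,n) ∈ (ℤ³\{0})³ : k+m+n = 0 and ±k₃/|k| ± m₃/|m| ± n₃/|n| = 0 for some choice of signs}, and let χ be its indicator (as a function of (k,n) with m = −k−n). Then for every i ≥ 0, sup_{n ∈ ℤ³\{0}} ∑_{k ∈ S_i} χ(k, −k−n, n)·|k|^{-1} ≤ C₀·2^i for an absolute constant C₀, where S_i = {k ∈ ℤ³\{0} : 2^i ≤ |k| < 2^{i+1}}. -/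
set_option maxHeartbeats 1600000

/-- Euclidean norm of a lattice point in ℤ³. -/
noncomputable def znorm (k : Fin 3 → ℤ) : ℝ := Real.sqrt (∑ i, ((k i : ℝ))^2)

/-- The resonance condition on a triple (k, m, n) of nonzero lattice points:
±k₃/|k| ± m₃/|m| ± n₃/|n| = 0 for some choice of signs. -/
def Resonant (k m n : Fin 3 → ℤ) : Prop :=
  k ≠ 0 ∧ m ≠ 0 ∧ n ≠ 0 ∧ k + m + n = 0 ∧
  ∃ σ₁ σ₂ σ₃ : ℝ, (σ₁ = 1 ∨ σ₁ = -1) ∧ (σ₂ = 1 ∨ σ₂ = -1) ∧ (σ₃ = 1 ∨ σ₃ = -1) ∧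
    σ₁ * (k 2 : ℝ) / znorm k + σ₂ * (m 2 : ℝ) / znorm m + σ₃ * (n 2 : ℝ) / znorm n = 0

namespace Stmt4Aux

open Polynomial

lemma znorm_sq (k : Fin 3 → ℤ) :
    znorm k ^ 2 = (k 0 : ℝ)^2 + (k 1 : ℝ)^2 + (k 2 : ℝ)^2 := by
  rw [znorm, Real.sq_sqrt (by positivity), Fin.sum_univ_three]

lemma znorm_pos {k : Fin 3 → ℤ} (hk : k ≠ 0) : 0 < znorm k := by
  obtain ⟨j, hj⟩ := Function.ne_iff.mp hk
  have hj' : (k j : ℝ) ≠ 0 := by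
    simpa using (Int.cast_ne_zero (α := ℝ)).mpr (by simpa using hj)
  refine Real.sqrt_pos.mpr (Finset.sum_pos' (fun i _ => by positivity)
    ⟨j, Finset.mem_univ j, by positivity⟩)

lemma abs_le_znorm (k : Fin 3 → ℤ) (j : Fin 3) : |(k j : ℝ)| ≤ znorm k := by
  rw [← Real.sqrt_sq_eq_abs]
  exact Real.sqrt_le_sqrt (Finset.single_le_sum
    (f := fun i => ((k i : ℝ))^2) (fun i _ => by positivity) (Finset.mem_univ j))

lemma sign_sq {x y z σ₁ σ₂ σ₃ : ℝ} (h1 : σ₁ = 1 ∨ σ₁ = -1) (h2 : σ₂ = 1 ∨ σ₂ = -1)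
    (h3 : σ₃ = 1 ∨ σ₃ = -1) (h : σ₁ * x + σ₂ * y + σ₃ * z = 0) :
    (x^2 + y^2 - z^2)^2 = 4 * (x^2 * y^2) := by
  have hp : (x+y+z) * ((x+y-z) * ((x-y+z) * (x-y-z))) = 0 := by
    rcases h1 with rfl | rfl <;> rcases h2 with rfl | rfl <;> rcases h3 with rfl | rfl <;>
      first
      | linear_combination ((x+y-z) * ((x-y+z) * (x-y-z))) * h
      | linear_combination (-((x+y-z) * ((x-y+z) * (x-y-z)))) * h
      | linear_combination ((x+y+z) * ((x-y+z) * (x-y-z))) * h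
      | linear_combination (-((x+y+z) * ((x-y+z) * (x-y-z)))) * h
      | linear_combination ((x+y+z) * ((x+y-z) * (x-y-z))) * h
      | linear_combination (-((x+y+z) * ((x+y-z) * (x-y-z)))) * h
      | linear_combination ((x+y+z) * ((x+y-z) * (x-y+z))) * h
      | linear_combination (-((x+y+z) * ((x+y-z) * (x-y+z)))) * h
  linear_combination hp

lemma resonant_sq {k m n : Fin 3 → ℤ} (h : Resonant k m n) :
    (((k 2 : ℝ)/znorm k)^2 + ((m 2 : ℝ)/znorm m)^2 - ((n 2 : ℝ)/znorm n)^2)^2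
      = 4 * ((((k 2 : ℝ)/znorm k)^2) * (((m 2 : ℝ)/znorm m)^2)) := by
  obtain ⟨_, _, _, _, σ₁, σ₂, σ₃, h1, h2, h3, heq⟩ := h
  rw [mul_div_assoc, mul_div_assoc, mul_div_assoc] at heq
  exact sign_sq h1 h2 h3 heq

/-- The degree-8 integer polynomial whose roots contain all resonant third coordinates. -/
noncomputable def resP (a b c N : ℝ) : Polynomial ℝ :=
  C (a^2*c^4*N^2 - 2*a^2*c^6*N + a^2*c^8 - 2*a^2*b*c^4*N + 2*a^2*b*c^6 + a^2*b^2*c^4) +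
  C (4*a^2*c^3*N^2 - 8*a^2*c^5*N + 4*a^2*c^7 - 4*a^2*b*c^3*N + 4*a^2*b*c^5) * X +
  C (-6*a*c^6*N + 2*a*c^8 - 2*a*b*c^2*N^2 - 8*a*b*c^4*N + 4*a*b*c^6 - 2*a*b^2*c^2*N
      + 2*a*b^2*c^4 + 6*a^2*c^2*N^2 - 12*a^2*c^4*N + 6*a^2*c^6 - 2*a^2*b*c^2*N
      + 2*a^2*b*c^4) * X^2 +
  C (-24*a*c^5*N + 8*a*c^7 - 4*a*b*c*N^2 - 16*a*b*c^3*N + 8*a*b*c^5 + 4*a^2*c*N^2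
      - 8*a^2*c^3*N + 4*a^2*c^5) * X^3 +
  C (-4*c^6*N + c^8 - 6*b*c^4*N + 2*b*c^6 + b^2*N^2 - 2*b^2*c^2*N + b^2*c^4
      - 36*a*c^4*N + 12*a*c^6 - 2*a*b*N^2 - 8*a*b*c^2*N + 4*a*b*c^4 + a^2*N^2
      - 2*a^2*c^2*N + a^2*c^4) * X^4 +
  C (-16*c^5*N + 4*c^7 - 12*b*c^3*N + 4*b*c^5 - 24*a*c^3*N + 8*a*c^5) * X^5 +
  C (-24*c^4*N + 6*c^6 - 6*b*c^2*N + 2*b*c^4 - 6*a*c^2*N + 2*a*c^4) * X^6 +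
  C (-16*c^3*N + 4*c^5) * X^7 +
  C (c^4 - 4*c^2*N) * X^8

lemma resP_natDegree_le (a b c N : ℝ) : (resP a b c N).natDegree ≤ 8 := by
  unfold resP; compute_degree

lemma resP_coeff8 (a b c N : ℝ) : (resP a b c N).coeff 8 = c^4 - 4*c^2*N := by
  unfold resP
  simp only [coeff_add, coeff_C_mul, coeff_X_pow, coeff_X, coeff_C]
  norm_num

lemma resP_eval (a b c N t : ℝ) (hA : t^2 + a ≠ 0) (hB : (t+c)^2 + b ≠ 0) (hN : N ≠ 0) :
    eval t (resP a b c N) = (N * (t^2+a) * ((t+c)^2+b))^2 *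
      ((t^2/(t^2+a) + (t+c)^2/((t+c)^2+b) - c^2/N)^2
        - 4 * (t^2/(t^2+a) * ((t+c)^2/((t+c)^2+b)))) := by
  simp only [resP, eval_add, eval_mul, eval_pow, eval_C, eval_X]
  field_simp
  ring


lemma resonant_root (n k : Fin 3 → ℤ) (h : Resonant k (-k-n) n) :
    IsRoot (resP ((k 0 : ℝ)^2+(k 1 : ℝ)^2)
      (((k 0 : ℝ)+(n 0 : ℝ))^2+((k 1 : ℝ)+(n 1 : ℝ))^2) ((n 2 : ℝ))
      ((n 0 : ℝ)^2+(n 1 : ℝ)^2+(n 2 : ℝ)^2)) ((k 2 : ℝ)) := by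
  have hk := znorm_pos h.1
  have hm := znorm_pos h.2.1
  have hnn := znorm_pos h.2.2.1
  have hsq := resonant_sq h
  have hmj : ∀ j, (((-k-n) j : ℤ) : ℝ) = -(k j : ℝ) - (n j : ℝ) := by
    intro j; push_cast [Pi.sub_apply, Pi.neg_apply]; ring
  have hA : ((k 2 : ℝ))^2 + ((k 0 : ℝ)^2+(k 1 : ℝ)^2) = znorm k ^ 2 := by
    rw [znorm_sq]; ring
  have hB : ((k 2 : ℝ) + (n 2 : ℝ))^2 + (((k 0 : ℝ)+(n 0 : ℝ))^2+((k 1 : ℝ)+(n 1 : ℝ))^2)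
      = znorm (-k-n) ^ 2 := by
    rw [znorm_sq, hmj 0, hmj 1, hmj 2]; ring
  have hN : (n 0 : ℝ)^2+(n 1 : ℝ)^2+(n 2 : ℝ)^2 = znorm n ^ 2 := (znorm_sq n).symm
  have hA0 : ((k 2 : ℝ))^2 + ((k 0 : ℝ)^2+(k 1 : ℝ)^2) ≠ 0 := by
    rw [hA]; exact (pow_pos hk 2).ne'
  have hB0 : ((k 2 : ℝ) + (n 2 : ℝ))^2 + (((k 0 : ℝ)+(n 0 : ℝ))^2+((k 1 : ℝ)+(n 1 : ℝ))^2) ≠ 0 := by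
    rw [hB]; exact (pow_pos hm 2).ne'
  have hN0 : (n 0 : ℝ)^2+(n 1 : ℝ)^2+(n 2 : ℝ)^2 ≠ 0 := by
    rw [hN]; exact (pow_pos hnn 2).ne'
  rw [IsRoot, resP_eval _ _ _ _ _ hA0 hB0 hN0]
  apply mul_eq_zero_of_right
  have hx : ((k 2 : ℝ)/znorm k)^2
      = ((k 2 : ℝ))^2 / (((k 2 : ℝ))^2 + ((k 0 : ℝ)^2+(k 1 : ℝ)^2)) := by
    rw [div_pow, hA]
  have hy : (((((-k-n) 2 : ℤ)) : ℝ)/znorm (-k-n))^2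
      = ((k 2 : ℝ) + (n 2 : ℝ))^2 /
        (((k 2 : ℝ) + (n 2 : ℝ))^2 + (((k 0 : ℝ)+(n 0 : ℝ))^2+((k 1 : ℝ)+(n 1 : ℝ))^2)) := by
    rw [div_pow, hmj 2, hB]
    congr 1
    ring
  have hz : ((n 2 : ℝ)/znorm n)^2
      = ((n 2 : ℝ))^2 / ((n 0 : ℝ)^2+(n 1 : ℝ)^2+(n 2 : ℝ)^2) := by
    rw [div_pow, hN]
  rw [hx, hy, hz] at hsq
  linear_combination hsq

lemma resonant_n3zero (n k : Fin 3 → ℤ) (hc : n 2 = 0) (h : Resonant k (-k-n) n) :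
    k 2 = 0 ∨ 2*(k 0)*(n 0) + 2*(k 1)*(n 1) + (n 0)^2 + (n 1)^2 = 0 := by
  have hk := znorm_pos h.1
  have hm := znorm_pos h.2.1
  have hsq := resonant_sq h
  have hmj : ∀ j, (((-k-n) j : ℤ) : ℝ) = -(k j : ℝ) - (n j : ℝ) := by
    intro j; push_cast [Pi.sub_apply, Pi.neg_apply]; ring
  have hc' : (n 2 : ℝ) = 0 := by rw [hc]; exact Int.cast_zero
  rw [hc'] at hsq
  have h0 : (((k 2 : ℝ)/znorm k)^2 - ((((-k-n) 2 : ℤ) : ℝ)/znorm (-k-n))^2)^2 = 0 := by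
    have hz : ((0 : ℝ)/znorm n)^2 = 0 := by simp
    rw [hz] at hsq
    linear_combination hsq
  have hxy : ((k 2 : ℝ)/znorm k)^2 = ((((-k-n) 2 : ℤ) : ℝ)/znorm (-k-n))^2 := by
    have := (pow_eq_zero_iff two_ne_zero).mp h0
    linarith [this]
  rw [div_pow, div_pow,
    div_eq_div_iff (by positivity : znorm k ^ 2 ≠ 0) (by positivity : znorm (-k-n) ^ 2 ≠ 0)]
    at hxy
  rw [znorm_sq k, znorm_sq (-k-n), hmj 0, hmj 1, hmj 2] at hxy
  have hZ : (k 2)^2 * ((-(k 0)-n 0)^2+(-(k 1)-n 1)^2+(-(k 2)-n 2)^2)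
      = (-(k 2)-n 2)^2 * ((k 0)^2+(k 1)^2+(k 2)^2) := by exact_mod_cast hxy
  rw [hc] at hZ
  have hfin : (k 2)^2 * (2*(k 0)*(n 0) + 2*(k 1)*(n 1) + (n 0)^2 + (n 1)^2) = 0 := by
    linear_combination hZ
  rcases mul_eq_zero.mp hfin with h' | h'
  · exact Or.inl (pow_eq_zero_iff two_ne_zero |>.mp h')
  · exact Or.inr h'

lemma funext3 {k k' : Fin 3 → ℤ} (h0 : k 0 = k' 0) (h1 : k 1 = k' 1) (h2 : k 2 = k' 2) :
    k = k' := by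
  funext j
  fin_cases j
  · exact h0
  · exact h1
  · exact h2

lemma card_main (i : ℕ) (n : Fin 3 → ℤ) (hn : n ≠ 0) (S : Finset (Fin 3 → ℤ))
    (hres : ∀ k ∈ S, Resonant k (-k-n) n)
    (hbox : ∀ k ∈ S, ∀ j, |k j| ≤ (2^(i+1) : ℤ)) :
    S.card ≤ 8 * (2^(i+2)+1)^2 := by
  classical
  set Bx : Finset (ℤ × ℤ) :=
    Finset.Icc (-(2^(i+1) : ℤ)) (2^(i+1)) ×ˢ Finset.Icc (-(2^(i+1) : ℤ)) (2^(i+1)) with hBx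
  have hBxcard : Bx.card = (2^(i+2)+1)^2 := by
    rw [hBx, Finset.card_product, Int.card_Icc]
    have h1 : ((2 : ℤ)^(i+1) + 1 - -(2^(i+1))) = ((2^(i+2)+1 : ℕ) : ℤ) := by push_cast; ring
    rw [h1, Int.toNat_natCast]
    ring
  have hmem2 : ∀ k ∈ S, ∀ p q : Fin 3, (k p, k q) ∈ Bx := by
    intro k hk p q
    have h1 := abs_le.mp (hbox k hk p)
    have h2 := abs_le.mp (hbox k hk q)
    exact Finset.mem_product.mpr ⟨Finset.mem_Icc.mpr h1, Finset.mem_Icc.mpr h2⟩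
  by_cases hc : n 2 = 0
  · -- degenerate case n₃ = 0
    have hn01 : n 0 ≠ 0 ∨ n 1 ≠ 0 := by
      by_contra hcon
      push_neg at hcon
      exact hn (funext3 hcon.1 hcon.2 hc)
    have hsub : S ⊆ S.filter (fun k => k 2 = 0) ∪
        S.filter (fun k => 2*(k 0)*(n 0) + 2*(k 1)*(n 1) + (n 0)^2 + (n 1)^2 = 0) := by
      intro k hk
      rcases resonant_n3zero n k hc (hres k hk) with h | h
      · exact Finset.mem_union_left _ (Finset.mem_filter.mpr ⟨hk, h⟩)
      · exact Finset.mem_union_right _ (Finset.mem_filter.mpr ⟨hk, h⟩)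
    have h1 : (S.filter (fun k => k 2 = 0)).card ≤ (2^(i+2)+1)^2 := by
      rw [← hBxcard]
      apply Finset.card_le_card_of_injOn (fun k => (k 0, k 1))
      · intro k hk; exact hmem2 k (Finset.mem_filter.mp hk).1 0 1
      · intro k hk k' hk' he
        obtain ⟨-, hk2⟩ := Finset.mem_filter.mp (Finset.mem_coe.mp hk)
        obtain ⟨-, hk2'⟩ := Finset.mem_filter.mp (Finset.mem_coe.mp hk')
        exact funext3 (congrArg Prod.fst he) (congrArg Prod.snd he) (by rw [hk2, hk2'])
    have h2 : (S.filter
        (fun k => 2*(k 0)*(n 0) + 2*(k 1)*(n 1) + (n 0)^2 + (n 1)^2 = 0)).card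
        ≤ (2^(i+2)+1)^2 := by
      rw [← hBxcard]
      rcases hn01 with hn0 | hn1
      · apply Finset.card_le_card_of_injOn (fun k => (k 1, k 2))
        · intro k hk; exact hmem2 k (Finset.mem_filter.mp hk).1 1 2
        · intro k hk k' hk' he
          obtain ⟨-, hkE⟩ := Finset.mem_filter.mp (Finset.mem_coe.mp hk)
          obtain ⟨-, hkE'⟩ := Finset.mem_filter.mp (Finset.mem_coe.mp hk')
          have hpr : (k 1, k 2) = (k' 1, k' 2) := he
          have e1 : k 1 = k' 1 := (Prod.ext_iff.mp hpr).1
          have e2 : k 2 = k' 2 := (Prod.ext_iff.mp hpr).2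
          have e0 : k 0 = k' 0 := by
            have hz : 2*(n 0)*(k 0 - k' 0) = 0 := by
              linear_combination hkE - hkE' - 2*(n 1)*e1
            rcases mul_eq_zero.mp hz with h | h
            · exact absurd (by linarith : n 0 = 0) hn0
            · linarith
          exact funext3 e0 e1 e2
      · apply Finset.card_le_card_of_injOn (fun k => (k 0, k 2))
        · intro k hk; exact hmem2 k (Finset.mem_filter.mp hk).1 0 2
        · intro k hk k' hk' he
          obtain ⟨-, hkE⟩ := Finset.mem_filter.mp (Finset.mem_coe.mp hk)
          obtain ⟨-, hkE'⟩ := Finset.mem_filter.mp (Finset.mem_coe.mp hk')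
          have hpr : (k 0, k 2) = (k' 0, k' 2) := he
          have e0 : k 0 = k' 0 := (Prod.ext_iff.mp hpr).1
          have e2 : k 2 = k' 2 := (Prod.ext_iff.mp hpr).2
          have e1 : k 1 = k' 1 := by
            have hz : 2*(n 1)*(k 1 - k' 1) = 0 := by
              linear_combination hkE - hkE' - 2*(n 0)*e0
            rcases mul_eq_zero.mp hz with h | h
            · exact absurd (by linarith : n 1 = 0) hn1
            · linarith
          exact funext3 e0 e1 e2
    calc S.card ≤ _ := Finset.card_le_card hsub
      _ ≤ _ := Finset.card_union_le _ _
      _ ≤ 8 * (2^(i+2)+1)^2 := by linarith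
  · -- nondegenerate case n₃ ≠ 0
    have key : ∀ p ∈ Bx, (S.filter fun k => (k 0, k 1) = p).card ≤ 8 := by
      intro p _
      set a : ℝ := (p.1 : ℝ)^2+(p.2 : ℝ)^2 with ha
      set b : ℝ := ((p.1 : ℝ)+(n 0 : ℝ))^2+((p.2 : ℝ)+(n 1 : ℝ))^2 with hb
      set N : ℝ := (n 0 : ℝ)^2+(n 1 : ℝ)^2+(n 2 : ℝ)^2 with hN
      have hc2 : ((n 2 : ℝ)) ≠ 0 := Int.cast_ne_zero.mpr hc
      have hPne : resP a b ((n 2 : ℝ)) N ≠ 0 := by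
        intro h0
        have h8 := resP_coeff8 a b ((n 2 : ℝ)) N
        rw [h0, Polynomial.coeff_zero] at h8
        have hpos : (0 : ℝ) < (n 2 : ℝ)^2 := by positivity
        rw [hN] at h8
        nlinarith [sq_nonneg ((n 0 : ℝ)), sq_nonneg ((n 1 : ℝ))]
      have hchain : (resP a b ((n 2 : ℝ)) N).roots.toFinset.card ≤ 8 :=
        le_trans (Multiset.toFinset_card_le _)
          (le_trans (Polynomial.card_roots' _) (resP_natDegree_le _ _ _ _))
      refine le_trans ?_ hchain
      apply Finset.card_le_card_of_injOn (fun k => ((k 2 : ℤ) : ℝ))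
      · intro k hk
        obtain ⟨hkS, hkE⟩ := Finset.mem_filter.mp hk
        have hk0 : k 0 = p.1 := congrArg Prod.fst hkE
        have hk1 : k 1 = p.2 := congrArg Prod.snd hkE
        have hr := resonant_root n k (hres k hkS)
        rw [hk0, hk1] at hr
        rw [Finset.mem_coe, Multiset.mem_toFinset, Polynomial.mem_roots']
        exact ⟨hPne, hr⟩
      · intro k hk k' hk' he
        obtain ⟨-, hkE⟩ := Finset.mem_filter.mp (Finset.mem_coe.mp hk)
        obtain ⟨-, hkE'⟩ := Finset.mem_filter.mp (Finset.mem_coe.mp hk')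
        have he' : ((k 2 : ℤ) : ℝ) = ((k' 2 : ℤ) : ℝ) := he
        have e2 : k 2 = k' 2 := by exact_mod_cast he'
        have hpr : (k 0, k 1) = (k' 0, k' 1) := hkE.trans hkE'.symm
        have e0 : k 0 = k' 0 := (Prod.ext_iff.mp hpr).1
        have e1 : k 1 = k' 1 := (Prod.ext_iff.mp hpr).2
        exact funext3 e0 e1 e2
    have := Finset.card_le_mul_card_image_of_maps_to
      (f := fun k => (k 0, k 1)) (fun k hk => hmem2 k hk 0 1) 8 key
    rw [hBxcard] at this
    exact this

end Stmt4Aux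

open Stmt4Aux in
/-- the key dyadic counting estimate: uniformly in n ≠ 0,
∑_{k ∈ S_i, (k,−k−n,n) resonant} |k|⁻¹ ≤ C₀·2^i for an absolute constant C₀. -/
theorem stmt4 :
    ∃ C₀ : ℝ, 0 < C₀ ∧ ∀ (i : ℕ) (n : Fin 3 → ℤ), n ≠ 0 →
      ∑' k : {k : Fin 3 → ℤ // Resonant k (-k - n) n ∧
          (2:ℝ)^i ≤ znorm k ∧ znorm k < 2^(i+1)},
        (znorm k.1)⁻¹ ≤ C₀ * 2^i := by
  classical
  refine ⟨512, by norm_num, ?_⟩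
  intro i n hn
  have hbox : ∀ k : Fin 3 → ℤ, znorm k < 2^(i+1) → ∀ j, |k j| ≤ (2^(i+1) : ℤ) := by
    intro k hlt j
    have h1 : |(k j : ℝ)| < 2^(i+1) := lt_of_le_of_lt (abs_le_znorm k j) hlt
    have h2 : ((|k j| : ℤ) : ℝ) < ((2^(i+1) : ℤ) : ℝ) := by push_cast; simpa using h1
    exact le_of_lt (by exact_mod_cast h2)
  have hfin : {k : Fin 3 → ℤ | Resonant k (-k - n) n ∧
      (2:ℝ)^i ≤ znorm k ∧ znorm k < 2^(i+1)}.Finite := by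
    apply Set.Finite.subset (Set.Finite.pi'
      (t := fun _ : Fin 3 => Set.Icc (-(2^(i+1) : ℤ)) (2^(i+1)))
      (fun _ => Set.finite_Icc _ _))
    intro k hk j
    exact Set.mem_Icc.mpr (abs_le.mp (hbox k hk.2.2 j))
  haveI hFT : Fintype {k : Fin 3 → ℤ // Resonant k (-k - n) n ∧
      (2:ℝ)^i ≤ znorm k ∧ znorm k < 2^(i+1)} := hfin.fintype
  rw [tsum_fintype]
  set T : Finset (Fin 3 → ℤ) := Finset.univ.image
    (fun x : {k : Fin 3 → ℤ // Resonant k (-k - n) n ∧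
      (2:ℝ)^i ≤ znorm k ∧ znorm k < 2^(i+1)} => x.1) with hT
  have hcardT : (Finset.univ : Finset {k : Fin 3 → ℤ // Resonant k (-k - n) n ∧
      (2:ℝ)^i ≤ znorm k ∧ znorm k < 2^(i+1)}).card = T.card :=
    (Finset.card_image_of_injective _ Subtype.val_injective).symm
  have hTcard : T.card ≤ 8 * (2^(i+2)+1)^2 := by
    apply card_main i n hn T
    · intro k hk
      obtain ⟨x, -, rfl⟩ := Finset.mem_image.mp hk
      exact x.2.1
    · intro k hk j
      obtain ⟨x, -, rfl⟩ := Finset.mem_image.mp hk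
      exact hbox _ x.2.2.2 j
  have hpow : (0:ℝ) < 2^i := by positivity
  have hnat : 8 * (2^(i+2)+1)^2 ≤ 512*(2^i*2^i) := by
    have h2 : (2:ℕ)^(i+3) = 2*2^(i+2) := by ring
    have h3 : 1 ≤ (2:ℕ)^(i+2) := Nat.one_le_two_pow
    have h1 : (2:ℕ)^(i+2)+1 ≤ 2^(i+3) := by omega
    calc 8 * (2^(i+2)+1)^2 ≤ 8 * ((2:ℕ)^(i+3))^2 := by
          exact Nat.mul_le_mul_left _ (Nat.pow_le_pow_left h1 2)
      _ = 512*(2^i*2^i) := by ring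
  calc ∑ k : {k : Fin 3 → ℤ // Resonant k (-k - n) n ∧
          (2:ℝ)^i ≤ znorm k ∧ znorm k < 2^(i+1)}, (znorm k.1)⁻¹
      ≤ (Finset.univ : Finset {k : Fin 3 → ℤ // Resonant k (-k - n) n ∧
          (2:ℝ)^i ≤ znorm k ∧ znorm k < 2^(i+1)}).card • ((2:ℝ)^i)⁻¹ := by
        apply Finset.sum_le_card_nsmul
        intro x _
        exact inv_anti₀ hpow x.2.2.1
    _ = (T.card : ℝ) * ((2:ℝ)^i)⁻¹ := by rw [hcardT, nsmul_eq_mul]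
    _ ≤ ((512*(2^i*2^i) : ℕ) : ℝ) * ((2:ℝ)^i)⁻¹ := by
        gcongr
        exact_mod_cast le_trans hTcard hnat
    _ = 512 * 2^i := by
        have h2 : (2:ℝ)^i ≠ 0 := by positivity
        push_cast
        field_simp
end

section
/- Abstract uniqueness via the 2D-type estimate: Let V ⊂ H ⊂ V' be a Gelfand triple, ν > 0, A : V → V' with ⟨Au, u⟩ = −ν‖u‖_V² (e.g. A = νΔ), and B̃ : V × V → V' bilinear with ⟨B̃(u,v),v⟩ = 0 and |⟨B̃(u,v),u⟩| ≤ C‖u‖_H‖u‖_V‖v‖_V. If u, v ∈ C([0,T]; H) ∩ L²(0,T; V) are two solutions of ∂_t u + B̃(u,u) = νΔu in V' with ∂_t u, ∂_t v ∈ L²(0,T; V') and u(0) = v(0), then u(t) = v(t) for all t ∈ [0,T]. -/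
open MeasureTheory Set Filter
set_option maxHeartbeats 1000000

/-- One-sided Dini-derivative comparison lemma: if `f` is continuous on `[a,b]`,
`β ≥ 0` is integrable on `(a,b]`, and at every interior point the left upper Dini
derivative of `f` is `≤ β t` (encoded: for every `c > β t`, eventually to the left
`f t - f s ≤ c (t - s)`), then `f b - f a ≤ ∫_{(a,b]} β`. -/
theorem dini_le_integral (f β : ℝ → ℝ) (a b : ℝ) (hab : a ≤ b)
    (hf : ContinuousOn f (Set.Icc a b))
    (hβ : IntegrableOn β (Set.Ioc a b))
    (hβ0 : ∀ t, 0 ≤ β t)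
    (hslope : ∀ t ∈ Set.Ioo a b, ∀ c, β t < c →
      ∀ᶠ s in nhdsWithin t (Set.Iio t), f t - f s ≤ c * (t - s)) :
    f b - f a ≤ ∫ s in Set.Ioc a b, β s := by
  rcases eq_or_lt_of_le hab with rfl | hab'
  · simp
  refine le_of_forall_pos_le_add (fun ε εpos => ?_)
  -- Vitali–Carathéodory
  obtain ⟨G, hGgt, hGlsc, hGint, hGtop, hGlt⟩ :=
    exists_lt_lowerSemicontinuous_integral_lt (μ := volume.restrict (Set.Ioc a b)) β hβ εpos
  set H : ℝ → ℝ := fun t => ∫ x in Set.Ioc a t, (G x).toReal with hHdef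
  have hGint' : IntegrableOn (fun x => (G x).toReal) (Set.Ioc a b) := hGint
  have hHcont : ContinuousOn H (Set.Icc a b) :=
    intervalIntegral.continuousOn_primitive ((integrableOn_Icc_iff_integrableOn_Ioc (by simp)).2 hGint')
  have hHa : H a = 0 := by simp [hHdef]
  -- additivity of H
  have hHadd : ∀ s t : ℝ, a ≤ s → s ≤ t → t ≤ b →
      H t - H s = ∫ x in Set.Ioc s t, (G x).toReal := by
    intro s t has hst htb
    have hsub1 : Set.Ioc a s ⊆ Set.Ioc a b := Set.Ioc_subset_Ioc le_rfl (hst.trans htb)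
    have hsub2 : Set.Ioc s t ⊆ Set.Ioc a b := Set.Ioc_subset_Ioc has htb
    have hunion : Set.Ioc a s ∪ Set.Ioc s t = Set.Ioc a t := Set.Ioc_union_Ioc_eq_Ioc has hst
    have := setIntegral_union (f := fun x => (G x).toReal) (μ := volume)
      (Set.Ioc_disjoint_Ioc_of_le le_rfl) measurableSet_Ioc (hGint'.mono_set hsub1)
      (hGint'.mono_set hsub2)
    rw [hHdef]; simp only; rw [← hunion, this]; ring
  -- ψ := f - H
  set ψ : ℝ → ℝ := fun s => f s - H s with hψdef
  have hψcont : ContinuousOn ψ (Set.Icc a b) := hf.sub hHcont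
  -- key step on Ico
  have key : ∀ y ∈ Set.Ico a b, f y - f a ≤ H y := by
    intro y hy
    rcases eq_or_lt_of_le hy.1 with rfl | hay
    · simp [hHa]
    have hIccsub : Set.Icc a y ⊆ Set.Icc a b := Set.Icc_subset_Icc le_rfl hy.2.le
    set E : Set ℝ := Set.Icc a y ∩ ψ ⁻¹' (Set.Ici (ψ y)) with hEdef
    have hyE : y ∈ E := ⟨⟨hy.1, le_rfl⟩, Set.mem_preimage.2 (Set.mem_Ici.2 le_rfl)⟩
    have hEclosed : IsClosed E :=
      (hψcont.mono hIccsub).preimage_isClosed_of_isClosed isClosed_Icc isClosed_Ici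
    have hEbdd : BddBelow E := ⟨a, fun x hx => hx.1.1⟩
    set m : ℝ := sInf E with hmdef
    have hmE : m ∈ E := hEclosed.csInf_mem ⟨y, hyE⟩ hEbdd
    have hmy : m ≤ y := hmE.1.2
    have hma : a ≤ m := hmE.1.1
    have hm_eq : m = a := by
      by_contra hne
      have ham : a < m := lt_of_le_of_ne hma (Ne.symm hne)
      have hmIoo : m ∈ Set.Ioo a b := ⟨ham, lt_of_le_of_lt hmy hy.2⟩
      -- pick c between β m and G m
      obtain ⟨c, hc1, hc2⟩ := EReal.exists_between_coe_real (hGgt m)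
      have hc1' : β m < c := by exact_mod_cast hc1
      -- lsc gives an interval where G > c
      have hev : ∀ᶠ z in nhds m, (c : EReal) < G z := hGlsc m c hc2
      obtain ⟨δ, hδpos, hδ⟩ := Metric.eventually_nhds_iff.1 hev
      -- combine eventual facts in 𝓝[<] m
      have h1 : ∀ᶠ s in nhdsWithin m (Set.Iio m), f m - f s ≤ c * (m - s) :=
        hslope m hmIoo c hc1'
      have h2 : ∀ᶠ s in nhdsWithin m (Set.Iio m), s ∈ Set.Ioi (max a (m - δ)) :=
        eventually_nhdsWithin_of_eventually_nhds
          (Ioi_mem_nhds (by simp [ham, hδpos]))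
      have h3 : ∀ᶠ s in nhdsWithin m (Set.Iio m), s ∈ Set.Iio m := self_mem_nhdsWithin
      obtain ⟨s, hs1, hs2, hs3⟩ := (h1.and (h2.and h3)).exists
      have hsa : a < s := lt_of_le_of_lt (le_max_left _ _) hs2
      have hsδ : m - δ < s := lt_of_le_of_lt (le_max_right _ _) hs2
      have hsm : s < m := hs3
      -- lower bound on H m - H s
      have hHl : c * (m - s) ≤ H m - H s := by
        rw [hHadd s m hsa.le hsm.le (hmIoo.2.le)]
        have hsubIoc : Set.Ioc s m ⊆ Set.Ioc a b := Set.Ioc_subset_Ioc hsa.le hmIoo.2.le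
        have htop' : ∀ᵐ x ∂volume.restrict (Set.Ioc s m), G x < ⊤ :=
          ae_restrict_of_ae_restrict_of_subset hsubIoc hGtop
        have hmem : ∀ᵐ x ∂volume.restrict (Set.Ioc s m), x ∈ Set.Ioc s m :=
          ae_restrict_mem measurableSet_Ioc
        have hptwise : ∀ᵐ x ∂volume.restrict (Set.Ioc s m),
            c ≤ (G x).toReal := by
          filter_upwards [htop', hmem] with x hxtop hxmem
          have hdist : dist x m < δ := by
            rw [Real.dist_eq, abs_lt]
            constructor <;> [linarith [hxmem.1]; linarith [hxmem.2, hδpos]]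
          have hcx : (c : EReal) < G x := hδ hdist
          have hbot : G x ≠ ⊥ := fun h => by simp [h] at hcx
          have htop : G x ≠ ⊤ := hxtop.ne
          have : (c : EReal) < ((G x).toReal : EReal) := by
            rwa [EReal.coe_toReal htop hbot]
          exact_mod_cast this.le
        calc c * (m - s) = ∫ _ in Set.Ioc s m, c := by
              simp [Real.volume_Ioc, ENNReal.toReal_ofReal (by linarith : (0:ℝ) ≤ m - s)]
              rw [max_eq_left (by linarith)]; ring
          _ ≤ ∫ x in Set.Ioc s m, (G x).toReal := by
              refine setIntegral_mono_ae_restrict (integrableOn_const ?_)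
                (hGint'.mono_set hsubIoc) hptwise
              simp [Real.volume_Ioc]
      -- s is in E, contradicting minimality
      have hψs : ψ m ≤ ψ s := by
        have := hs1
        simp only [hψdef]
        have : f m - f s ≤ H m - H s := le_trans hs1 hHl
        linarith
      have hsE : s ∈ E := ⟨⟨hsa.le, hsm.le.trans hmy⟩, le_trans hmE.2 hψs⟩
      exact absurd (csInf_le hEbdd hsE) (not_le.2 hsm)
    -- conclude
    have : ψ y ≤ ψ a := by rw [← hm_eq]; exact hmE.2
    simp only [hψdef, hHa] at this
    linarith
  -- pass to the limit y → b⁻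
  have hbf : f b - f a ≤ H b := by
    have hbc : b ∈ closure (Set.Ico a b) := by
      rw [closure_Ico hab'.ne]; exact ⟨hab, le_rfl⟩
    have hne : (nhdsWithin b (Set.Ico a b)).NeBot := mem_closure_iff_nhdsWithin_neBot.1 hbc
    have hIsub : Set.Ico a b ⊆ Set.Icc a b := Set.Ico_subset_Icc_self
    have ht1 : Filter.Tendsto (fun y => f y - f a - H y) (nhdsWithin b (Set.Ico a b))
        (nhds (f b - f a - H b)) := by
      have hfc := (hf.continuousWithinAt ⟨hab, le_rfl⟩).mono hIsub
      have hHc := (hHcont.continuousWithinAt ⟨hab, le_rfl⟩).mono hIsub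
      exact (hfc.sub continuousWithinAt_const).sub hHc
    have hev : ∀ᶠ y in nhdsWithin b (Set.Ico a b), f y - f a - H y ≤ 0 := by
      filter_upwards [eventually_mem_nhdsWithin] with y hy
      linarith [key y hy]
    linarith [le_of_tendsto ht1 hev]
  -- finish with the Vitali–Carathéodory bound
  have : H b ≤ (∫ s in Set.Ioc a b, β s) + ε := le_of_lt hGlt
  linarith



/-- abstract uniqueness via the 2D-type estimate.  V ⊂ H ⊂ V' is a
Gelfand triple: V (modeling H¹) embeds in the Hilbert space H (modeling L²) via ι,
and V' is modeled as the dual V →L[ℝ] ℝ; H embeds in V' via J h = ⟨h, ι ·⟩_H.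
A : V → V' satisfies ⟨Au, u⟩ = −ν‖u‖_V² (e.g. A = νΔ), B̃ is bilinear with
⟨B̃(u,v),v⟩ = 0 and |⟨B̃(u,v),u⟩| ≤ C‖u‖_H‖u‖_V‖v‖_V.  If u, v ∈ C([0,T];H) ∩
L²(0,T;V) solve ∂ₜu + B̃(u,u) = νΔu in V' with ∂ₜu, ∂ₜv ∈ L²(0,T;V') and
u(0) = v(0), then u ≡ v on [0,T]. -/
theorem stmt12 (V H : Type*) [NormedAddCommGroup V] [NormedSpace ℝ V]
    [NormedAddCommGroup H] [InnerProductSpace ℝ H]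
    (ι : V →L[ℝ] H) (hι : Function.Injective ι)
    (J : H →L[ℝ] (V →L[ℝ] ℝ))
    (hJ : ∀ (h : H) (w : V), J h w = inner ℝ h (ι w))
    (ν : ℝ) (hν : 0 < ν)
    (A : V →L[ℝ] (V →L[ℝ] ℝ)) (hA : ∀ w : V, A w w = -ν * ‖w‖^2)
    (B : V →ₗ[ℝ] V →ₗ[ℝ] (V →L[ℝ] ℝ))
    (hBcancel : ∀ u v : V, B u v v = 0)
    (C : ℝ) (hBbound : ∀ u v : V, |B u v u| ≤ C * ‖ι u‖ * ‖u‖ * ‖v‖)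
    (T : ℝ) (hT : 0 < T)
    (u v : ℝ → V)
    (hu_cont : ContinuousOn (fun t => ι (u t)) (Set.Icc 0 T))
    (hv_cont : ContinuousOn (fun t => ι (v t)) (Set.Icc 0 T))
    (hu_L2 : IntervalIntegrable (fun t => ‖u t‖^2) volume 0 T)
    (hv_L2 : IntervalIntegrable (fun t => ‖v t‖^2) volume 0 T)
    (hu_eq : ∀ t ∈ Set.Ioo 0 T,
      HasDerivAt (fun s => J (ι (u s))) (A (u t) - B (u t) (u t)) t)
    (hv_eq : ∀ t ∈ Set.Ioo 0 T,
      HasDerivAt (fun s => J (ι (v s))) (A (v t) - B (v t) (v t)) t)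
    (hu_dt_L2 : IntervalIntegrable (fun t => ‖A (u t) - B (u t) (u t)‖^2) volume 0 T)
    (hv_dt_L2 : IntervalIntegrable (fun t => ‖A (v t) - B (v t) (v t)‖^2) volume 0 T)
    (h0 : u 0 = v 0) :
    ∀ t ∈ Set.Icc 0 T, u t = v t := by
  set K : ℝ := C^2 / (2*ν) with hKdef
  have hK0 : 0 ≤ K := div_nonneg (sq_nonneg C) (by linarith)
  have hK : K * (2*ν) = C^2 := by rw [hKdef, div_mul_cancel₀]; positivity
  set h : ℝ → H := fun s => ι (u s) - ι (v s) with hhdef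
  set φ : ℝ → ℝ := fun s => ‖h s‖^2 with hφdef
  set m : ℝ → ℝ := fun s => K * ‖u s‖^2 with hmdef
  set β : ℝ → ℝ := fun s => m s * φ s with hβdef
  have hφ0 : φ 0 = 0 := by simp [hφdef, hhdef, h0]
  have hφnn : ∀ s, 0 ≤ φ s := fun s => sq_nonneg _
  have hmnn : ∀ s, 0 ≤ m s := fun s => mul_nonneg hK0 (sq_nonneg _)
  have hβnn : ∀ s, 0 ≤ β s := fun s => mul_nonneg (hmnn s) (hφnn s)
  have hφcont : ContinuousOn φ (Set.Icc 0 T) := ((hu_cont.sub hv_cont).norm).pow 2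
  -- integrability
  have hu_int : IntegrableOn (fun s => ‖u s‖^2) (Set.Ioc 0 T) volume :=
    (intervalIntegrable_iff_integrableOn_Ioc_of_le hT.le).1 hu_L2
  have hm_int : IntegrableOn m (Set.Ioc 0 T) volume := hu_int.const_mul K
  have hφ_meas : AEStronglyMeasurable φ (volume.restrict (Set.Ioc 0 T)) :=
    (hφcont.aestronglyMeasurable measurableSet_Icc).mono_measure
      (Measure.restrict_mono Set.Ioc_subset_Icc_self le_rfl)
  obtain ⟨M, hM⟩ := isCompact_Icc.exists_bound_of_continuousOn hφcont
  have hβ_int : IntegrableOn β (Set.Ioc 0 T) volume := by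
    refine Integrable.mono' (hm_int.mul_const M) (hm_int.aestronglyMeasurable.mul hφ_meas) ?_
    filter_upwards [ae_restrict_mem measurableSet_Ioc] with s hs
    have h1 : φ s ≤ M := le_trans (le_abs_self _) (hM s (Set.Ioc_subset_Icc_self hs))
    have h2 : 0 ≤ m s * φ s := hβnn s
    rw [Real.norm_eq_abs, abs_of_nonneg h2]
    exact mul_le_mul_of_nonneg_left h1 (hmnn s)
  -- key slope estimate
  have hkey : ∀ t' ∈ Set.Ioo 0 T, ∀ c, β t' < c →
      ∀ᶠ s in nhdsWithin t' (Set.Iio t'), φ t' - φ s ≤ c * (t' - s) := by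
    intro t' ht' c hc
    set wt : V := u t' - v t' with hwt
    have hιwt : ι wt = h t' := by simp [hwt, hhdef, map_sub]
    set D : V →L[ℝ] ℝ := (A (u t') - B (u t') (u t')) - (A (v t') - B (v t') (v t')) with hD
    -- derivative of ρ
    have hg : HasDerivAt (fun s => J (ι (u s)) - J (ι (v s))) D t' :=
      (hu_eq t' ht').sub (hv_eq t' ht')
    have hρ0 : HasDerivAt (fun s => (J (ι (u s)) - J (ι (v s))) wt) (D wt) t' := by
      have := hg.clm_apply (hasDerivAt_const t' wt)
      simpa using this
    have hρeq : (fun s => (J (ι (u s)) - J (ι (v s))) wt)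
        = fun s => (inner ℝ (h s) (h t') : ℝ) := by
      funext r
      have : (J (ι (u r)) - J (ι (v r))) wt = J (ι (u r)) wt - J (ι (v r)) wt := rfl
      rw [this, hJ, hJ, hιwt, hhdef]
      simp [inner_sub_left]
    have hρ : HasDerivAt (fun s => (inner ℝ (h s) (h t') : ℝ)) (D wt) t' := hρeq ▸ hρ0
    -- value of D wt
    have hDval : D wt = -ν * ‖wt‖^2 - B wt (u t') wt := by
      have e1 : A (u t') wt - A (v t') wt = -ν * ‖wt‖^2 := by
        rw [← ContinuousLinearMap.sub_apply, ← map_sub]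
        exact hA wt
      have e2 : B (u t') (u t') - B (v t') (v t') = B wt (u t') + B (v t') wt := by
        rw [hwt, map_sub, map_sub, LinearMap.sub_apply]
        abel
      have e3 : B (u t') (u t') wt - B (v t') (v t') wt = B wt (u t') wt := by
        rw [← ContinuousLinearMap.sub_apply, e2, ContinuousLinearMap.add_apply,
          hBcancel, add_zero]
      have e4 : D wt = (A (u t') wt - A (v t') wt)
          - (B (u t') (u t') wt - B (v t') (v t') wt) := by
        rw [hD]; simp only [ContinuousLinearMap.sub_apply]; ring
      rw [e4, e1, e3]
    -- the bound 2 * D wt ≤ β t'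
    have hbound : 2 * D wt ≤ β t' := by
      have habs := hBbound wt (u t')
      have hβval : β t' = K * ‖u t'‖^2 * ‖ι wt‖^2 := by
        simp only [hβdef, hmdef, hφdef, hιwt, mul_assoc]
      rw [hβval, hDval]
      have h1 : -(B wt (u t') wt) ≤ C * ‖ι wt‖ * ‖wt‖ * ‖u t'‖ := by
        have h2 := neg_abs_le (B wt (u t') wt)
        linarith [habs]
      have hexp : (C * (‖u t'‖ * ‖ι wt‖) - 2*ν*‖wt‖)^2
          = C^2 * (‖u t'‖^2 * ‖ι wt‖^2)
            - (2*ν) * (2 * (C * ‖ι wt‖ * ‖wt‖ * ‖u t'‖)) + (2*ν) * (2*ν*‖wt‖^2) := by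
        ring
      rw [← hK] at hexp
      have hF : 0 ≤ (2*ν) * (K * (‖u t'‖^2 * ‖ι wt‖^2)
          - 2 * (C * ‖ι wt‖ * ‖wt‖ * ‖u t'‖) + 2*ν*‖wt‖^2) := by
        nlinarith [sq_nonneg (C * (‖u t'‖ * ‖ι wt‖) - 2*ν*‖wt‖), hexp]
      have hF2 : 0 ≤ K * (‖u t'‖^2 * ‖ι wt‖^2)
          - 2 * (C * ‖ι wt‖ * ‖wt‖ * ‖u t'‖) + 2*ν*‖wt‖^2 :=
        nonneg_of_mul_nonneg_right hF (by linarith)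
      nlinarith [hF2, h1]
    -- pass to slopes
    have hDc : D wt < c / 2 := by linarith
    have htend := hasDerivAt_iff_tendsto_slope.1 hρ
    have hev : ∀ᶠ s in nhdsWithin t' {t'}ᶜ,
        slope (fun s => (inner ℝ (h s) (h t') : ℝ)) t' s < c / 2 :=
      htend.eventually_lt_const hDc
    have hmono : nhdsWithin t' (Set.Iio t') ≤ nhdsWithin t' {t'}ᶜ :=
      nhdsWithin_mono t' (fun x hx => ne_of_lt hx)
    filter_upwards [hev.filter_mono hmono, self_mem_nhdsWithin] with s hs hs'
    have hst : s < t' := hs'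
    rw [slope_def_field] at hs
    -- slope = (ρ s - ρ t')/(s - t')
    have hsneg : s - t' < 0 := by linarith
    set ρs : ℝ := inner ℝ (h s) (h t') with hρs
    set ρt : ℝ := inner ℝ (h t') (h t') with hρt
    have hq : (ρs - ρt) / (s - t') < c / 2 := hs
    have hq' : c / 2 * (s - t') < ρs - ρt := (div_lt_iff_of_neg hsneg).1 hq
    -- energy identity
    have hid : ‖h t' - h s‖^2 = ‖h t'‖^2 - 2 * (inner ℝ (h t') (h s) : ℝ) + ‖h s‖^2 :=
      norm_sub_sq_real _ _
    have hρt' : ρt = ‖h t'‖^2 := real_inner_self_eq_norm_sq _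
    have hρs' : (inner ℝ (h t') (h s) : ℝ) = ρs := real_inner_comm _ _
    have hφt : φ t' = ‖h t'‖^2 := rfl
    have hφs : φ s = ‖h s‖^2 := rfl
    nlinarith [sq_nonneg ‖h t' - h s‖, hid, hq']
  -- main integral inequality via the Dini lemma
  have main : ∀ p q : ℝ, 0 ≤ p → p ≤ q → q ≤ T →
      φ q - φ p ≤ ∫ s in Set.Ioc p q, β s := by
    intro p q hp hpq hqT
    refine dini_le_integral φ β p q hpq (hφcont.mono (Set.Icc_subset_Icc hp hqT))
      (hβ_int.mono_set (Set.Ioc_subset_Ioc hp hqT)) hβnn ?_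
    intro t' ht' c hc
    exact hkey t' ⟨lt_of_le_of_lt hp ht'.1, lt_of_lt_of_le ht'.2 hqT⟩ c hc
  -- Grönwall bootstrap: φ ≡ 0 on [0, T]
  have hφzero : ∀ s ∈ Set.Icc 0 T, φ s = 0 := by
    set S0 : Set ℝ := {r | r ∈ Set.Icc 0 T ∧ ∀ s ∈ Set.Icc 0 r, φ s = 0} with hS0
    have h0S : (0:ℝ) ∈ S0 := by
      refine ⟨⟨le_rfl, hT.le⟩, fun s hs => ?_⟩
      have : s = 0 := le_antisymm hs.2 hs.1
      rw [this]; exact hφ0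
    have hbddS : BddAbove S0 := ⟨T, fun x hx => hx.1.2⟩
    set r : ℝ := sSup S0 with hrdef
    have hr0 : 0 ≤ r := le_csSup hbddS h0S
    have hrT : r ≤ T := csSup_le ⟨0, h0S⟩ (fun x hx => hx.1.2)
    have hlt : ∀ s, 0 ≤ s → s < r → φ s = 0 := by
      intro s hs0 hsr
      obtain ⟨x, hxS, hsx⟩ := exists_lt_of_lt_csSup ⟨0, h0S⟩ hsr
      exact hxS.2 s ⟨hs0, hsx.le⟩
    have hφr : φ r = 0 := by
      rcases eq_or_lt_of_le hr0 with hr0' | hr0'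
      · rw [← hr0']; exact hφ0
      · have hbc : r ∈ closure (Set.Ico 0 r) := by
          rw [closure_Ico hr0'.ne]; exact ⟨hr0, le_rfl⟩
        have hne : (nhdsWithin r (Set.Ico 0 r)).NeBot :=
          mem_closure_iff_nhdsWithin_neBot.1 hbc
        have ht1 : Filter.Tendsto φ (nhdsWithin r (Set.Ico 0 r)) (nhds (φ r)) :=
          (hφcont.continuousWithinAt ⟨hr0, hrT⟩).mono
            (fun x hx => ⟨hx.1, hx.2.le.trans hrT⟩)
        have ht2 : Filter.Tendsto φ (nhdsWithin r (Set.Ico 0 r)) (nhds 0) := by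
          have : ∀ᶠ x in nhdsWithin r (Set.Ico 0 r), φ x = 0 := by
            filter_upwards [eventually_mem_nhdsWithin] with x hx
            exact hlt x hx.1 hx.2
          exact Filter.Tendsto.congr' (Filter.EventuallyEq.symm this) tendsto_const_nhds
        exact tendsto_nhds_unique ht1 ht2
    have hrr : ∀ s ∈ Set.Icc 0 r, φ s = 0 := by
      intro s hs
      rcases eq_or_lt_of_le hs.2 with h | h
      · rw [h]; exact hφr
      · exact hlt s hs.1 h
    have hrTeq : r = T := by
      by_contra hne
      have hrT' : r < T := lt_of_le_of_ne hrT hne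
      -- find t₀ > r with small mass of m
      set F : ℝ → ℝ := fun x => ∫ s in Set.Ioc r x, m s with hFdef
      have hmr_int : IntegrableOn m (Set.Ioc r T) volume :=
        hm_int.mono_set (Set.Ioc_subset_Ioc hr0 le_rfl)
      have hFcont : ContinuousOn F (Set.Icc r T) :=
        intervalIntegral.continuousOn_primitive
          ((integrableOn_Icc_iff_integrableOn_Ioc (by simp)).2 hmr_int)
      have hFr : F r = 0 := by simp [hFdef]
      have hneB : (nhdsWithin r (Set.Ioc r T)).NeBot := by
        refine mem_closure_iff_nhdsWithin_neBot.1 ?_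
        rw [closure_Ioc hrT'.ne]; exact ⟨le_rfl, hrT⟩
      have htendF : Filter.Tendsto F (nhdsWithin r (Set.Ioc r T)) (nhds 0) := by
        rw [← hFr]
        exact (hFcont.continuousWithinAt ⟨le_rfl, hrT⟩).mono Set.Ioc_subset_Icc_self
      have hevF : ∀ᶠ x in nhdsWithin r (Set.Ioc r T), F x < 1/2 :=
        htendF.eventually_lt_const (by norm_num)
      obtain ⟨t₀, ht₀F, ht₀mem⟩ := (hevF.and eventually_mem_nhdsWithin).exists
      have hrt₀ : r < t₀ := ht₀mem.1
      have ht₀T : t₀ ≤ T := ht₀mem.2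
      have hsubI : Set.Icc r t₀ ⊆ Set.Icc 0 T := Set.Icc_subset_Icc hr0 ht₀T
      obtain ⟨xm, hxm_mem, hxm_max⟩ :=
        isCompact_Icc.exists_isMaxOn ⟨r, Set.left_mem_Icc.2 hrt₀.le⟩ (hφcont.mono hsubI)
      have hφxm_nn : 0 ≤ φ xm := hφnn xm
      have hineq : ∀ x ∈ Set.Icc r t₀, φ x ≤ (1/2) * φ xm := by
        intro x hx
        have hIsub : Set.Ioc r x ⊆ Set.Ioc 0 T := Set.Ioc_subset_Ioc hr0 (hx.2.trans ht₀T)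
        have h1 : φ x - φ r ≤ ∫ s in Set.Ioc r x, β s :=
          main r x hr0 hx.1 (hx.2.trans ht₀T)
        have h2 : (∫ s in Set.Ioc r x, β s) ≤ ∫ s in Set.Ioc r x, m s * φ xm := by
          refine setIntegral_mono_on (hβ_int.mono_set hIsub)
            ((hm_int.mono_set hIsub).mul_const (φ xm)) measurableSet_Ioc ?_
          intro s hs
          have hsmem : s ∈ Set.Icc r t₀ := ⟨hs.1.le, hs.2.trans hx.2⟩
          exact mul_le_mul_of_nonneg_left (hxm_max hsmem) (hmnn s)
        have h3 : (∫ s in Set.Ioc r x, m s * φ xm)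
            = (∫ s in Set.Ioc r x, m s) * φ xm := integral_mul_const _ _
        have h4 : (∫ s in Set.Ioc r x, m s) ≤ F t₀ := by
          refine setIntegral_mono_set (hmr_int.mono_set (Set.Ioc_subset_Ioc le_rfl ht₀T)) ?_ ?_
          · filter_upwards with s using hmnn s
          · exact HasSubset.Subset.eventuallyLE (Set.Ioc_subset_Ioc le_rfl hx.2)
        have h5 : (∫ s in Set.Ioc r x, m s) * φ xm ≤ F t₀ * φ xm :=
          mul_le_mul_of_nonneg_right h4 hφxm_nn
        have h6 : F t₀ * φ xm ≤ (1/2) * φ xm :=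
          mul_le_mul_of_nonneg_right ht₀F.le hφxm_nn
        rw [hφr] at h1
        linarith
      have hφxm0 : φ xm = 0 := by
        have := hineq xm hxm_mem
        linarith
      have ht₀S : t₀ ∈ S0 := by
        refine ⟨⟨hr0.trans hrt₀.le, ht₀T⟩, fun s hs => ?_⟩
        rcases le_or_gt s r with h | h
        · exact hrr s ⟨hs.1, h⟩
        · have : φ s ≤ 0 := by
            have := hineq s ⟨h.le, hs.2⟩
            rw [hφxm0] at this; linarith
          exact le_antisymm this (hφnn s)
      exact absurd (le_csSup hbddS ht₀S) (not_le.2 hrt₀)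
    intro s hs
    exact hrr s ⟨hs.1, hs.2.trans_eq hrTeq.symm⟩
  -- conclude u t = v t
  intro t ht
  have hφt : φ t = 0 := hφzero t ht
  have hnorm : ‖h t‖ = 0 := by
    have := hφt
    simp only [hφdef] at this
    exact pow_eq_zero_iff (n := 2) (by norm_num) |>.1 this
  have hh0 : ι (u t) - ι (v t) = 0 := by
    have : h t = 0 := norm_eq_zero.1 hnorm
    simpa [hhdef] using this
  have : ι (u t) = ι (v t) := sub_eq_zero.1 hh0
  exact hι this
end
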